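/- arXiv:1204.5583 — 4 statements merged into one kernel-verified Lean document; each statement's English description precedes it below -/
import Mathlib

section
/- With Θ(g,h,k) as above defining classes in H₂(G) ≅ π₂(G) (G simply connected), the map Θ: G³ → π₂(G) satisfies the group 3-cocycle identity: g·Θ(h,k,l) − Θ(gh,k,l) + Θ(g,hk,l) − Θ(g,h,kl) + Θ(g,h,k) = 0 for all g,h,k,l ∈ G, where G acts trivially on π₂(G), so this reads Θ(h,k,l) − Θ(gh,k,l) + Θ(g,hk,l) − Θ(g,h,kl) + Θ(g,h,k) = 0 in π₂(G). -/
/-- With `Θ(g,h,k) = g·β(h,k) − β(gh,k) + β(g,hk) − β(g,h)` defining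
classes in `H₂(G) ≅ π₂(G)` (the quotient of 2-chains by the subgroup `Bd` of
boundaries, on which `G` acts trivially since `g•σ − σ ∈ Bd` for cycles `σ`),
the map `Θ : G³ → π₂(G)` satisfies the group 3-cocycle identity
`Θ(h,k,l) − Θ(gh,k,l) + Θ(g,hk,l) − Θ(g,h,kl) + Θ(g,h,k) = 0` in `π₂(G)`. -/
theorem stmt4 {G C1 C2 : Type*} [Group G] [AddCommGroup C1] [AddCommGroup C2]
    [DistribMulAction G C1] [DistribMulAction G C2]
    (bd : C2 →+ C1) (hbd : ∀ (g : G) (σ : C2), bd (g • σ) = g • bd σ)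
    (α : G → C1) (β : G → G → C2)
    (hβ : ∀ g h : G, bd (β g h) = α g + g • α h - α (g * h))
    (Θ : G → G → G → C2)
    (hΘ : ∀ g h k : G, Θ g h k = g • β h k - β (g * h) k + β g (h * k) - β g h)
    (Bd : AddSubgroup C2)  -- the subgroup of boundaries of 3-chains
    (hBd : ∀ (g : G) (σ : C2), bd σ = 0 → g • σ - σ ∈ Bd)  -- trivial action on H₂ -- (Hurewicz: H₂(G) ≅ π₂(G) for 1-connected G)
    : ∀ g h k l : G,
      ((Θ h k l - Θ (g * h) k l + Θ g (h * k) l - Θ g h (k * l) + Θ g h k : C2) :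
        C2 ⧸ Bd) = 0 := by
  intro g h k l
  have hcyc : bd (Θ h k l) = 0 := by
    rw [hΘ]
    simp only [map_sub, map_add, hbd, hβ, smul_sub, smul_add, mul_smul, mul_assoc]
    abel
  have hmem : g • Θ h k l - Θ h k l ∈ Bd := hBd g _ hcyc
  have hchain : Θ h k l - Θ (g*h) k l + Θ g (h*k) l - Θ g h (k*l) + Θ g h k
      = -(g • Θ h k l - Θ h k l) := by
    simp only [hΘ, smul_sub, smul_add, mul_smul, mul_assoc]
    abel
  rw [hchain, QuotientAddGroup.eq_zero_iff]
  exact neg_mem hmem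
end

section
/- Let (φ^{1,1,1}, φ^{1,2,0}, φ^{2,0,1}, φ^{2,1,0}, φ^{3,0,0}) be a differentiable 3-cocycle on BG• with values in (A → B). Then the multiplication map m on arrows of Γ²[φ], defined by m(v₀,v₁,b₀,b₁,a₀,a₁) = (d₁(v₀), d₁(v₁), b₀+b₁+φ^{2,0,1}(v₀), a₀+a₁+φ^{2,1,0}(v₀,v₁)), commutes with the source maps, i.e. m∘s = s∘m, if and only if cocycle equation (7) holds: δ_gp(γ) + δ̌(F) − μ_*(Φ) = 0 (where γ = φ^{1,1,1}, F = φ^{2,0,1}, Φ = φ^{2,1,0}). -/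
/-- For a differentiable 3-cocycle
`(φ^{1,1,1}, φ^{1,2,0}, φ^{2,0,1}, φ^{2,1,0}, φ^{3,0,0})` on `BG•` with values in
`(A → B)`, the multiplication `m` on arrows of `Γ²[φ]`,
`m(v₀,v₁,b₀,b₁,a₀,a₁) = (d₁v₀, d₁v₁, b₀+b₁+φ^{2,0,1}(v₀), a₀+a₁+φ^{2,1,0}(v₀,v₁))`,
commutes with the source maps (`m∘s = s∘m`) if and only if the cocycle equation
`δ_gp(γ) + δ̌(F) − μ_*(Φ) = 0` holds (with `γ = φ^{1,1,1}`, `F = φ^{2,0,1}`,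
`Φ = φ^{2,1,0}`).  Here `I1, I2` index the covers of `G` and `G²` and
`d₀, d₁, d₂ : I2 → I1` are the simplicial face maps on indices. -/
theorem stmt13 {I1 I2 A B : Type*} [AddCommGroup A] [AddCommGroup B]
    (μ : A →+ B) (d0 d1 d2 : I2 → I1)
    (φ111 : I1 → I1 → B) (φ201 : I2 → B) (φ210 : I2 → I2 → A) :
    -- m ∘ s = s ∘ m, written out in components:
    (∀ (v0 v1 : I2) (b0 b1 : B) (a0 a1 : A),
      (b0 + μ a0 + φ111 (d2 v0) (d2 v1)) + (b1 + μ a1 + φ111 (d0 v0) (d0 v1))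
          + φ201 v1 =
        (b0 + b1 + φ201 v0) + μ (a0 + a1) + μ (φ210 v0 v1)
          + φ111 (d1 v0) (d1 v1)) ↔
    -- the cocycle equation (7): δ_gp(γ) + δ̌(F) − μ_*(Φ) = 0
    (∀ v0 v1 : I2,
      φ111 (d2 v0) (d2 v1) + φ111 (d0 v0) (d0 v1)
        + (φ201 v1 - φ201 v0) - μ (φ210 v0 v1)
        - φ111 (d1 v0) (d1 v1) = 0) := by
  constructor
  · intro h v0 v1
    have := h v0 v1 0 0 0 0
    simp only [map_zero, add_zero, zero_add] at this
    rw [← sub_eq_zero] at this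
    rw [← this]; abel
  · intro h v0 v1 b0 b1 a0 a1
    have := h v0 v1
    rw [← sub_eq_zero] at this
    rw [← sub_eq_zero, map_add, ← this]; abel
end

section
/- With notation as in the previous statement, the multiplication map m on Γ²[φ] respects groupoid composition (m(γ·γ') = m(γ)·m(γ') for composable arrows γ, γ') if and only if the cocycle equation δ_gp(η) + δ̌(Φ) = 0 holds, where η = φ^{1,2,0} and Φ = φ^{2,1,0}; explicitly: φ^{2,1,0}(v₀,v₁) + φ^{2,1,0}(v₁,v₂) − φ^{1,2,0}(d₁v₀, d₁v₁, d₁v₂) = φ^{2,1,0}(v₀,v₂) − φ^{1,2,0}(d₂v₀,d₂v₁,d₂v₂) − φ^{1,2,0}(d₀v₀,d₀v₁,d₀v₂). -/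
/-- The multiplication `m` on `Γ²[φ]` respects groupoid composition
(`m(γ·γ') = m(γ)·m(γ')` for composable arrows) if and only if the cocycle
equation `δ_gp(η) + δ̌(Φ) = 0` holds (with `η = φ^{1,2,0}`, `Φ = φ^{2,1,0}`);
explicitly
`φ^{2,1,0}(v₀,v₁) + φ^{2,1,0}(v₁,v₂) − φ^{1,2,0}(d₁v₀,d₁v₁,d₁v₂) =
 φ^{2,1,0}(v₀,v₂) − φ^{1,2,0}(d₂v₀,d₂v₁,d₂v₂) − φ^{1,2,0}(d₀v₀,d₀v₁,d₀v₂)`. -/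
theorem stmt14 {I1 I2 A B : Type*} [AddCommGroup A] [AddCommGroup B]
    (μ : A →+ B) (d0 d1 d2 : I2 → I1)
    (φ111 : I1 → I1 → B) (φ120 : I1 → I1 → I1 → A)
    (φ201 : I2 → B) (φ210 : I2 → I2 → A) :
    -- m respects composition, written out in the A-components
    -- (the B-components agree by definition):
    (∀ (v0 v1 v2 : I2) (a0 a1 a0' a1' : A),
      ((a0 + a0' - φ120 (d2 v0) (d2 v1) (d2 v2))
          + (a1 + a1' - φ120 (d0 v0) (d0 v1) (d0 v2)) + φ210 v0 v2) =
        ((a0 + a1 + φ210 v0 v1) + (a0' + a1' + φ210 v1 v2)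
          - φ120 (d1 v0) (d1 v1) (d1 v2))) ↔
    -- the cocycle equation δ_gp(η) + δ̌(Φ) = 0:
    (∀ v0 v1 v2 : I2,
      φ210 v0 v1 + φ210 v1 v2 - φ120 (d1 v0) (d1 v1) (d1 v2) =
        φ210 v0 v2 - φ120 (d2 v0) (d2 v1) (d2 v2)
          - φ120 (d0 v0) (d0 v1) (d0 v2)) := by
  constructor
  · intro h v0 v1 v2
    have key := h v0 v1 v2 0 0 0 0
    rw [← sub_eq_zero] at key ⊢; rw [← neg_eq_zero] at key
    rw [← key]; abel
  · intro h v0 v1 v2 a0 a1 a0' a1'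
    have key := h v0 v1 v2
    rw [← sub_eq_zero] at key ⊢; rw [← neg_eq_zero] at key
    rw [← key]; abel
end

section
/- With F̃ and Θ̃ a normalized (π₂(G) → 𝔷)-valued group cocycle (dF̃ = per_ω∘Θ̃, dΘ̃ = 0, trivial action, vanishing when an argument is e), define Φ̃_{(i,j),(i',j')}(g,h) as any elements of π₂(G) satisfying per_ω(Φ̃_{(i,j),(i',j')}(g,h)) = F_{i,j}(g,h) − F_{i',j'}(g,h) − γ_{i,i'}(g) − γ_{j,j'}(h) + γ_{ij,i'j'}(gh). Then the combination Φ_{(i',j'),(i'',j'')}(g,h) − Φ_{(i,j),(i'',j'')}(g,h) + Φ_{(i,j),(i',j')}(g,h), when expressed via Θ̃ as Θ̃(i,i⁻¹i',i'⁻¹i'') + Θ̃(i⁻¹i', i'⁻¹i'', i''⁻¹g) + Θ̃(j,j⁻¹j',j'⁻¹j'') + Θ̃(j⁻¹j', j'⁻¹j'', j''⁻¹g) − Θ̃(ij,(ij)⁻¹i'j',(i'j')⁻¹i''j'') − Θ̃((ij)⁻¹i'j', (i'j')⁻¹i''j'', (i''j'')⁻¹g), equals −η_{i,i',i''}(g)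 − η_{j,j',j''}(h) + η_{ij,i'j',i''j''}(gh), where η_{i,j,l}(g) = −Θ̃(j,j⁻¹l,l⁻¹g) + Θ̃(i,i⁻¹l,l⁻¹g) − Θ̃(i,i⁻¹j,j⁻¹g). -/
/-- Let `Θ̃ : G³ → π₂(G)` be a normalized 3-cocycle (trivial
`G`-action) and `η_{i,j,l}(g) = −Θ̃(j,j⁻¹l,l⁻¹g) + Θ̃(i,i⁻¹l,l⁻¹g) − Θ̃(i,i⁻¹j,j⁻¹g)`.
Then the combination
`Φ_{(i',j'),(i'',j'')}(g,h) − Φ_{(i,j),(i'',j'')}(g,h) + Φ_{(i,j),(i',j')}(g,h)`,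
expressed via `Θ̃` as the six-term sum below, equals
`−η_{i,i',i''}(g) − η_{j,j',j''}(h) + η_{ij,i'j',i''j''}(gh)`.
Here `P` plays the role of `π₂(G)`. -/
theorem stmt17 {G P : Type*} [Group G] [AddCommGroup P]
    (Θ : G → G → G → P)
    (hcoc : ∀ g h k l : G,
      Θ h k l - Θ (g * h) k l + Θ g (h * k) l - Θ g h (k * l) + Θ g h k = 0)
    (hnorm : ∀ g h k : G, g = 1 ∨ h = 1 ∨ k = 1 → Θ g h k = 0)
    (η : G → G → G → G → P)
    (hη : ∀ i j l g : G,
      η i j l g = -Θ j (j⁻¹ * l) (l⁻¹ * g) + Θ i (i⁻¹ * l) (l⁻¹ * g)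
        - Θ i (i⁻¹ * j) (j⁻¹ * g)) :
    ∀ i i' i'' j j' j'' g h : G,
      Θ i (i⁻¹ * i') (i'⁻¹ * i'') + Θ (i⁻¹ * i') (i'⁻¹ * i'') (i''⁻¹ * g)
        + Θ j (j⁻¹ * j') (j'⁻¹ * j'') + Θ (j⁻¹ * j') (j'⁻¹ * j'') (j''⁻¹ * h)
        - Θ (i * j) ((i * j)⁻¹ * (i' * j')) ((i' * j')⁻¹ * (i'' * j''))
        - Θ ((i * j)⁻¹ * (i' * j')) ((i' * j')⁻¹ * (i'' * j''))
            ((i'' * j'')⁻¹ * (g * h)) =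
      -η i i' i'' g - η j j' j'' h + η (i * j) (i' * j') (i'' * j'') (g * h) := by
  have key : ∀ a b c d : G,
      Θ a (a⁻¹ * b) (b⁻¹ * c) + Θ (a⁻¹ * b) (b⁻¹ * c) (c⁻¹ * d) = -η a b c d := by
    intro a b c d
    have h := hcoc a (a⁻¹ * b) (b⁻¹ * c) (c⁻¹ * d)
    rw [show a * (a⁻¹ * b) = b by group, show (a⁻¹ * b) * (b⁻¹ * c) = a⁻¹ * c by group,
      show (b⁻¹ * c) * (c⁻¹ * d) = b⁻¹ * d by group] at h
    rw [hη]
    abel_nf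
    abel_nf at h
    linear_combination (norm := abel) h
  intro i i' i'' j j' j'' g h
  have k1 := key i i' i'' g
  have k2 := key j j' j'' h
  have k3 := key (i * j) (i' * j') (i'' * j'') (g * h)
  linear_combination (norm := abel) k1 + k2 - k3
end
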